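/- Let A be a ring with right Krull dimension. Then A satisfies the ascending chain condition on prime (two-sided) ideals. -/

import Mathlib

set_option maxHeartbeats 1000000


open MulOpposite

/-- Deviation (Gabriel–Rentschler Krull dimension) of a preorder is `≤ α`:
in every strictly descending chain, all but finitely many of the
intervals (corresponding to successive factor modules) have deviation `< α`. -/
def DevLE (α : Ordinal.{0}) (P : Type) (inst : Preorder P) : Prop :=
  ∀ f : ℕ → P, (∀ n : ℕ, inst.lt (f (n + 1)) (f n)) →
    ∃ N : ℕ, ∀ n : ℕ, N ≤ n → ∃ β : Ordinal.{0}, ∃ _ : β < α,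
      DevLE β {x : P // inst.le (f (n + 1)) x ∧ inst.le x (f n)}
        (@Subtype.preorder P inst fun x => inst.le (f (n + 1)) x ∧ inst.le x (f n))
termination_by α

/-- A preorder has Krull dimension (deviation) if its deviation exists as an ordinal. -/
def HasKdimO (P : Type) [inst : Preorder P] : Prop := ∃ α : Ordinal.{0}, DevLE α P inst

/-- A module has Gabriel–Rentschler Krull dimension: the deviation of its submodule
lattice exists (intervals of this lattice are the submodule lattices of the
subquotients, so this agrees with the transfinite definition via factor modules). -/
def ModHasKdim (R M : Type) [Ring R] [AddCommGroup M] [Module R M] : Prop :=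
  HasKdimO (Submodule R M)

/-- A complete lattice (of submodules/ideals) is finite-dimensional: it contains no
infinite independent family (direct sum) of nonzero elements. -/
def FinDimL (L : Type) [CompleteLattice L] : Prop :=
  ¬ ∃ f : ℕ → L, (∀ n, f n ≠ ⊥) ∧ ∀ n, f n ⊓ (⨆ m, ⨆ _ : m ≠ n, f m) = ⊥

/-- A right ideal is two-sided if it is also closed under left multiplication. -/
def IsTwoSidedR {A : Type} [Ring A] (I : Submodule Aᵐᵒᵖ A) : Prop :=
  ∀ a ∈ I, ∀ b : A, b * a ∈ I

/-- A prime (two-sided) ideal of a ring, element-wise characterization. -/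
def IsPrime2 {A : Type} [Ring A] (P : Submodule Aᵐᵒᵖ A) : Prop :=
  IsTwoSidedR P ∧ P ≠ ⊤ ∧ ∀ a b : A, (∀ x : A, a * x * b ∈ P) → a ∈ P ∨ b ∈ P

theorem devle_transfer : ∀ (α : Ordinal.{0}), ∀ (P Q : Type) (iP : Preorder P) (iQ : Preorder Q)
    (e : Q → P), (∀ x y, iQ.le x y → iP.le (e x) (e y)) →
    (∀ x y, iQ.lt x y → iP.lt (e x) (e y)) →
    DevLE α P iP → DevLE α Q iQ := by
  intro α
  induction α using Ordinal.induction with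
  | h α IH =>
    intro P Q iP iQ e hmono hlt hP
    rw [DevLE] at hP ⊢
    intro f hf
    obtain ⟨N, hN⟩ := hP (fun n => e (f n)) (fun n => hlt _ _ (hf n))
    refine ⟨N, fun n hn => ?_⟩
    obtain ⟨β, hβ, hdev⟩ := hN n hn
    refine ⟨β, hβ, ?_⟩
    exact IH β hβ _ _ _ _
      (fun y => (⟨e y.1, hmono _ _ y.2.1, hmono _ _ y.2.2⟩ :
        {x : P // iP.le (e (f (n+1))) x ∧ iP.le x (e (f n))}))
      (fun x y h => show e x.1 ≤ e y.1 from hmono _ _ (Subtype.coe_le_coe.2 h))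
      (fun x y h => show (⟨e x.1,_⟩:{z : P // iP.le (e (f (n+1))) z ∧ iP.le z (e (f n))}) < ⟨e y.1,_⟩ from Subtype.mk_lt_mk.2 (hlt _ _ (Subtype.coe_lt_coe.2 h))) hdev

section Ring
variable {A : Type} [Ring A]

/-- Left multiplication as an `Aᵐᵒᵖ`-linear endomorphism of `A`. -/
def lmul (u : A) : A →ₗ[Aᵐᵒᵖ] A where
  toFun x := u * x
  map_add' := mul_add u
  map_smul' m x := by
    show u * (m • x) = m • (u * x)
    rw [MulOpposite.smul_eq_mul_unop, MulOpposite.smul_eq_mul_unop, mul_assoc]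

@[simp] lemma lmul_apply (u x : A) : lmul u x = u * x := rfl

lemma smul_op_mem (K : Submodule Aᵐᵒᵖ A) {x : A} (hx : x ∈ K) (s : A) : x * s ∈ K := by
  simpa [op_smul_eq_mul] using K.smul_mem (op s) hx

/-- Deviation of the interval `[b, t]` in the lattice of right ideals. -/
def DevLEInt (β : Ordinal.{0}) (b t : Submodule Aᵐᵒᵖ A) : Prop :=
  DevLE β {x : Submodule Aᵐᵒᵖ A // b ≤ x ∧ x ≤ t}
    (@Subtype.preorder _ _ fun x => b ≤ x ∧ x ≤ t)

lemma devleInt_mono {α : Ordinal} {b t b' t' : Submodule Aᵐᵒᵖ A}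
    (h : DevLEInt α b t) (hb : b ≤ b') (ht : t' ≤ t) : DevLEInt α b' t' :=
  devle_transfer α _ _ _ _ (fun x => ⟨x.1, le_trans hb x.2.1, le_trans x.2.2 ht⟩)
    (fun _ _ h => h) (fun _ _ h => h) h

lemma devleInt_of_global {α : Ordinal} (h : DevLE α (Submodule Aᵐᵒᵖ A) inferInstance)
    (b t : Submodule Aᵐᵒᵖ A) : DevLEInt α b t :=
  devle_transfer α _ _ _ _ (fun x => x.1) (fun _ _ h => h) (fun _ _ h => h) h

/-- Applying `DevLEInt` to a strictly descending chain inside `[b,t]`. -/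
lemma devleInt_chain {α : Ordinal} {b t : Submodule Aᵐᵒᵖ A}
    (h : DevLEInt α b t) (F : ℕ → Submodule Aᵐᵒᵖ A)
    (hF : ∀ n, b ≤ F n ∧ F n ≤ t) (hdesc : ∀ n, F (n + 1) < F n) :
    ∃ N, ∀ n, N ≤ n → ∃ β, β < α ∧ DevLEInt β (F (n + 1)) (F n) := by
  rw [DevLEInt, DevLE] at h
  obtain ⟨N, hN⟩ := h (fun n => ⟨F n, hF n⟩) (fun n => Subtype.mk_lt_mk.2 (hdesc n))
  refine ⟨N, fun n hn => ?_⟩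
  obtain ⟨β, hβ, hdev⟩ := hN n hn
  refine ⟨β, hβ, ?_⟩
  exact devle_transfer β _ _ _ _
    (fun x => ⟨⟨x.1, le_trans (hF (n+1)).1 x.2.1, le_trans x.2.2 (hF n).2⟩,
      Subtype.coe_le_coe.1 x.2.1, Subtype.coe_le_coe.1 x.2.2⟩)
    (fun _ _ h => h) (fun _ _ h => h) hdev




/-- Independence over `b` of a family of right ideals, via uniqueness of finite sums. -/
def Indep (b : Submodule Aᵐᵒᵖ A) (I : ℕ → Submodule Aᵐᵒᵖ A) : Prop :=
  ∀ (F : Finset ℕ) (y : ℕ → A), (∀ i ∈ F, y i ∈ I i) → (∑ i ∈ F, y i) ∈ b →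
    ∀ i ∈ F, y i ∈ b

lemma indep_two_sums {b : Submodule Aᵐᵒᵖ A} {I : ℕ → Submodule Aᵐᵒᵖ A} (hI : Indep b I)
    (F₁ F₂ : Finset ℕ) (y z : ℕ → A) (hy : ∀ i ∈ F₁, y i ∈ I i) (hz : ∀ i ∈ F₂, z i ∈ I i)
    (hdisj : ∀ i ∈ F₁, i ∉ F₂) (h : (∑ i ∈ F₁, y i) - (∑ i ∈ F₂, z i) ∈ b) :
    ∀ i ∈ F₁, y i ∈ b := by
  classical
  have hd : Disjoint F₁ F₂ := Finset.disjoint_left.2 hdisj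
  set w : ℕ → A := fun i => if i ∈ F₁ then y i else -z i with hw
  have hsum : (∑ i ∈ F₁ ∪ F₂, w i) ∈ b := by
    rw [Finset.sum_union hd]
    have e1 : ∑ i ∈ F₁, w i = ∑ i ∈ F₁, y i := Finset.sum_congr rfl (fun i hi => by simp [hw, hi])
    have e2 : ∑ i ∈ F₂, w i = -∑ i ∈ F₂, z i := by
      rw [← Finset.sum_neg_distrib]
      exact Finset.sum_congr rfl (fun i hi => by simp [hw, hdisj, Finset.disjoint_right.1 hd hi])
    rw [e1, e2]
    simpa [sub_eq_add_neg] using h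
  have hmem : ∀ i ∈ F₁ ∪ F₂, w i ∈ I i := by
    intro i hi
    rcases Finset.mem_union.1 hi with h1 | h2
    · simpa [hw, h1] using hy i h1
    · have : i ∉ F₁ := fun h1 => hdisj i h1 h2
      simpa [hw, this] using (I i).neg_mem (hz i h2)
  intro i hi
  have := hI (F₁ ∪ F₂) w hmem hsum i (Finset.mem_union_left _ hi)
  simpa [hw, hi] using this

lemma mem_sup_biSup {b : Submodule Aᵐᵒᵖ A} {I : ℕ → Submodule Aᵐᵒᵖ A} {p : ℕ → Prop} {x : A}
    (hx : x ∈ b ⊔ ⨆ (i) (_ : p i), I i) :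
    ∃ (F : Finset ℕ) (y : ℕ → A), (∀ i ∈ F, p i ∧ y i ∈ I i) ∧ x - (∑ i ∈ F, y i) ∈ b := by
  classical
  rw [Submodule.mem_sup] at hx
  obtain ⟨ξ, hξ, z, hz, rfl⟩ := hx
  rw [iSup_subtype', Submodule.mem_iSup_iff_exists_finsupp] at hz
  obtain ⟨f, hf, hfs⟩ := hz
  refine ⟨f.support.image Subtype.val, fun i => if h : p i then f ⟨i, h⟩ else 0, ?_, ?_⟩
  · intro i hi
    obtain ⟨j, _, rfl⟩ := Finset.mem_image.1 hi
    exact ⟨j.2, by simpa [j.2] using hf j⟩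
  · have : (∑ i ∈ f.support.image Subtype.val, (fun i => if h : p i then f ⟨i, h⟩ else 0) i)
        = ∑ j ∈ f.support, f j := by
      rw [Finset.sum_image (fun a _ b _ h => Subtype.val_injective h)]
      exact Finset.sum_congr rfl fun j _ => by simp [j.2]
    rw [this]
    have : z = ∑ j ∈ f.support, f j := by rw [← hfs]; rfl
    simpa [← this] using hξ



theorem fu : ∀ (α : Ordinal.{0}) (b t : Submodule Aᵐᵒᵖ A) (I : ℕ → Submodule Aᵐᵒᵖ A),
    (∀ n, b < I n) → (∀ n, I n ≤ t) → Indep b I → DevLEInt α b t → False := by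
  intro α
  induction α using Ordinal.induction with
  | h α IH =>
  intro b t I hbI hIt hind hdev
  classical
  set J : ℕ → Submodule Aᵐᵒᵖ A := fun k => b ⊔ ⨆ (i) (_ : (Nat.unpair i).1 = k), I i with hJ
  set T : ℕ → Submodule Aᵐᵒᵖ A := fun k => b ⊔ ⨆ (i) (_ : k ≤ (Nat.unpair i).1), I i with hT
  have hbt : b ≤ t := le_trans (hbI 0).le (hIt 0)
  have hle_biSup : ∀ (p : ℕ → Prop) (i : ℕ), p i → I i ≤ ⨆ (j) (_ : p j), I j :=
    fun p i hi => le_iSup₂ (f := fun j (_ : p j) => I j) i hi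
  have hJT : ∀ k, J k ≤ T k := by
    intro k; simp only [hJ, hT]
    exact sup_le_sup_left (iSup₂_le fun i hi => hle_biSup _ i hi.ge) _
  have hTdesc : ∀ k, T (k + 1) ≤ T k := by
    intro k; simp only [hT]
    exact sup_le_sup_left (iSup₂_le fun i hi => hle_biSup _ i (le_trans (Nat.le_succ k) hi)) _
  have hTt : ∀ k, T k ≤ t := by
    intro k; simp only [hT]
    exact sup_le hbt (iSup₂_le fun i _ => hIt i)
  have hJcapT : ∀ k x, x ∈ J k → x ∈ T (k + 1) → x ∈ b := by
    intro k x hx1 hx2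
    obtain ⟨F₁, y, hy, hxy⟩ := mem_sup_biSup hx1
    obtain ⟨F₂, z, hz, hxz⟩ := mem_sup_biSup hx2
    have hd : ∀ i ∈ F₁, i ∉ F₂ := by
      intro i hi hi2
      have h1 := (hy i hi).1
      have h2 := (hz i hi2).1
      omega
    have hsum : (∑ i ∈ F₁, y i) - (∑ i ∈ F₂, z i) ∈ b := by
      have := b.sub_mem hxz hxy
      simpa using this
    have hyb := indep_two_sums hind F₁ F₂ y z (fun i hi => (hy i hi).2)
      (fun i hi => (hz i hi).2) hd hsum
    have : (∑ i ∈ F₁, y i) ∈ b := Submodule.sum_mem _ (fun i hi => hyb i hi)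
    have := b.add_mem hxy this
    simpa using this
  have hwit : ∀ k, ∃ x, x ∈ J k ∧ x ∉ T (k + 1) ∧ x ∉ b := by
    intro k
    obtain ⟨x, hxI, hxb⟩ := SetLike.exists_of_lt (hbI (Nat.pair k 0))
    have hxJ : x ∈ J k := by
      have : I (Nat.pair k 0) ≤ J k :=
        le_trans (hle_biSup _ (Nat.pair k 0) (by simp [Nat.unpair_pair])) le_sup_right
      exact this hxI
    exact ⟨x, hxJ, fun hc => hxb (hJcapT k x hxJ hc), hxb⟩
  have hdesc : ∀ k, T (k + 1) < T k := by
    intro k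
    obtain ⟨x, hxJ, hxT, _⟩ := hwit k
    exact (SetLike.lt_iff_le_and_exists).2 ⟨hTdesc k, x, hJT k hxJ, hxT⟩
  obtain ⟨N, hN⟩ := devleInt_chain hdev T (fun k => ⟨le_sup_left, hTt k⟩) hdesc
  obtain ⟨β, hβ, hint⟩ := hN N le_rfl
  have hTJb : T (N + 1) ⊓ J N ≤ b := fun x hx => hJcapT N x hx.2 hx.1
  have hdevJ : DevLEInt β b (J N) := by
    refine devle_transfer β _ _ _ _
      (fun y => ⟨T (N + 1) ⊔ y.1, le_sup_left, sup_le (hTdesc N) (y.2.2.trans (hJT N))⟩)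
      (fun x y h => show T (N+1) ⊔ x.1 ≤ T (N+1) ⊔ y.1 from sup_le_sup_left h _) ?_ hint
    intro x y hxy
    rcases lt_iff_le_not_ge.1 hxy with ⟨hle, hnle⟩
    refine Subtype.mk_lt_mk.2 (lt_iff_le_not_ge.2 ⟨sup_le_sup_left hle _, fun hcon => hnle ?_⟩)
    have hy1 : y.1 ≤ T (N + 1) ⊔ x.1 := le_trans le_sup_right hcon
    have h1 : y.1 ≤ (x.1 ⊔ T (N + 1)) ⊓ J N := le_inf (by rwa [sup_comm x.1]) y.2.2
    rw [sup_inf_assoc_of_le _ x.2.2] at h1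
    have h2 : T (N + 1) ⊓ J N ≤ x.1 := le_trans hTJb x.2.1
    exact Subtype.coe_le_coe.1 (le_trans h1 (sup_le le_rfl h2))
  have hindk : Indep b (fun j => I (Nat.pair N j)) := by
    intro F y hy hsum i hi
    have key := hind (F.image (Nat.pair N)) (fun n => y (Nat.unpair n).2) ?_ ?_
      (Nat.pair N i) (Finset.mem_image_of_mem _ hi)
    · simpa [Nat.unpair_pair] using key
    · intro n hn
      obtain ⟨j, hj, rfl⟩ := Finset.mem_image.1 hn
      simpa [Nat.unpair_pair] using hy j hj
    · rw [Finset.sum_image (fun a _ c _ h => (Nat.pair_eq_pair.1 h).2)]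
      simpa [Nat.unpair_pair] using hsum
  exact IH β hβ b (J N) (fun j => I (Nat.pair N j)) (fun j => hbI _)
    (fun j => le_trans (hle_biSup _ (Nat.pair N j) (by simp [Nat.unpair_pair])) le_sup_right)
    hindk hdevJ

variable {b Q : Submodule Aᵐᵒᵖ A}

lemma prime_elt (hb : IsPrime2 b) {a c : A} (ha : a ∉ b) (hc : c ∉ b) :
    ∃ x, a * x * c ∉ b := by
  by_contra hcon
  push_neg at hcon
  rcases hb.2.2 a c hcon with h | h
  · exact ha h
  · exact hc h

lemma left_mul_mem (hb : IsPrime2 b) {a : A} (ha : a ∈ b) (c : A) : c * a ∈ b := hb.1 a ha c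

lemma not_top_one (hb : IsPrime2 b) : (1 : A) ∉ b := by
  intro h1
  apply hb.2.1
  rw [eq_top_iff]
  intro x _
  simpa using smul_op_mem b h1 x

/-- A two-sided ideal not inside the prime `b` meets every right ideal not inside `b`. -/
lemma ess_meet (hb : IsPrime2 b) (hQ : IsTwoSidedR Q) (hbQ : b < Q)
    (X : Submodule Aᵐᵒᵖ A) (hX : ¬ X ≤ b) : ∃ v, v ∈ X ∧ v ∈ Q ∧ v ∉ b := by
  obtain ⟨a, haX, hab⟩ := SetLike.not_le_iff_exists.1 hX
  obtain ⟨q, hqQ, hqb⟩ := SetLike.exists_of_lt hbQ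
  obtain ⟨x, hx⟩ := prime_elt hb hab hqb
  exact ⟨a * x * q, smul_op_mem X (smul_op_mem X haX x) q, hQ q hqQ (a * x), hx⟩


lemma exists_goodu (hb : IsPrime2 b) {α : Ordinal.{0}} (hdev : DevLEInt α b ⊤)
    (X : Submodule Aᵐᵒᵖ A) (hbX : b ≤ X) (hXb : ¬ X ≤ b) :
    ∃ u, u ∈ X ∧ u ∉ b ∧
      Submodule.comap (lmul u) b ⊓ (b ⊔ LinearMap.range (lmul u)) ≤ b := by
  classical
  set S : Set Ordinal.{0} := {γ | ∃ C : Submodule Aᵐᵒᵖ A,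
    b ≤ C ∧ ¬ C ≤ b ∧ C ≤ X ∧ DevLEInt γ b C} with hS
  have hSne : S.Nonempty := ⟨α, X, hbX, hXb, le_rfl, devleInt_mono hdev le_rfl le_top⟩
  set β := WellFounded.min wellFounded_lt S hSne with hβdef
  obtain ⟨C₀, hbC₀, hC₀b, hC₀X, hdevC₀⟩ := WellFounded.min_mem wellFounded_lt S hSne
  have hmin : ∀ γ, γ < β → γ ∉ S :=
    fun γ hγ hmem => WellFounded.not_lt_min wellFounded_lt S hmem hγ
  have hcrit : ∃ C : Submodule Aᵐᵒᵖ A, b ≤ C ∧ ¬ C ≤ b ∧ C ≤ C₀ ∧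
      ∀ N : Submodule Aᵐᵒᵖ A, b ≤ N → ¬ N ≤ b → N < C →
        ∃ γ, γ < β ∧ DevLEInt γ N C := by
    by_contra hcon
    push_neg at hcon
    have hstep : ∀ d : {C : Submodule Aᵐᵒᵖ A // b ≤ C ∧ ¬ C ≤ b ∧ C ≤ C₀},
        ∃ N, (b ≤ N ∧ ¬ N ≤ b ∧ N ≤ C₀) ∧ N < d.1 ∧
          ∀ γ, γ < β → ¬ DevLEInt γ N d.1 := by
      intro d
      obtain ⟨N, h1, h2, h3, h4⟩ := hcon d.1 d.2.1 d.2.2.1 d.2.2.2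
      exact ⟨N, ⟨h1, h2, le_trans h3.le d.2.2.2⟩, h3, h4⟩
    set step : {C : Submodule Aᵐᵒᵖ A // b ≤ C ∧ ¬ C ≤ b ∧ C ≤ C₀} →
        {C : Submodule Aᵐᵒᵖ A // b ≤ C ∧ ¬ C ≤ b ∧ C ≤ C₀} :=
      fun d => ⟨Classical.choose (hstep d), (Classical.choose_spec (hstep d)).1⟩ with hstepdef
    set g : ℕ → {C : Submodule Aᵐᵒᵖ A // b ≤ C ∧ ¬ C ≤ b ∧ C ≤ C₀} :=
      fun k => step^[k] ⟨C₀, hbC₀, hC₀b, le_rfl⟩ with hg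
    have hgsucc : ∀ k, g (k + 1) = step (g k) := by
      intro k
      rw [hg]
      exact Function.iterate_succ_apply' step k _
    have hgdesc : ∀ k, (g (k + 1)).1 < (g k).1 := by
      intro k
      rw [hgsucc k]
      exact (Classical.choose_spec (hstep (g k))).2.1
    obtain ⟨n, hn⟩ := devleInt_chain hdevC₀ (fun k => (g k).1)
      (fun k => ⟨(g k).2.1, (g k).2.2.2⟩) hgdesc
    obtain ⟨γ, hγ, hdevint⟩ := hn n le_rfl
    apply (Classical.choose_spec (hstep (g n))).2.2 γ hγ
    have he : (g (n+1)).1 = Classical.choose (hstep (g n)) := by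
      rw [hgsucc n, hstepdef]
    rw [he] at hdevint
    exact hdevint
  obtain ⟨C, hbC, hCb, hCC₀, hcritC⟩ := hcrit
  obtain ⟨a, haC, hab⟩ := SetLike.not_le_iff_exists.1 hCb
  obtain ⟨x, hx⟩ := prime_elt hb hab hab
  have huC : a * x ∈ C := smul_op_mem C haC x
  have huu : (a * x) * a ∉ b := hx
  have hub : a * x ∉ b := fun h => huu (smul_op_mem b h a)
  have hrange : b ⊔ LinearMap.range (lmul (a * x)) ≤ C := by
    refine sup_le hbC ?_
    rintro _ ⟨s, rfl⟩
    exact smul_op_mem C huC s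
  have hV : Submodule.comap (lmul (a * x)) b ⊓ C ≤ b := by
    by_contra hVb
    have hbV : b ≤ Submodule.comap (lmul (a * x)) b ⊓ C :=
      le_inf (fun r hr => left_mul_mem hb hr (a * x)) hbC
    have haV : a ∉ Submodule.comap (lmul (a * x)) b ⊓ C := fun h => huu h.1
    have hVC : Submodule.comap (lmul (a * x)) b ⊓ C < C :=
      lt_of_le_of_ne inf_le_right (fun he => haV (by rw [he]; exact haC))
    obtain ⟨γ, hγβ, hdevVC⟩ := hcritC _ hbV hVb hVC
    have hC'C : b ⊔ Submodule.map (lmul (a * x)) C ≤ C := by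
      refine sup_le hbC ?_
      rintro _ ⟨m, hm, rfl⟩
      exact smul_op_mem C huC m
    have huaC' : (a * x) * a ∈ b ⊔ Submodule.map (lmul (a * x)) C :=
      Submodule.mem_sup_right (show (a*x)*a ∈ Submodule.map (lmul (a * x)) C from ⟨a, haC, rfl⟩)
    have hC'b : ¬ b ⊔ Submodule.map (lmul (a * x)) C ≤ b := fun hle => huu (hle huaC')
    have hdevC' : DevLEInt γ b (b ⊔ Submodule.map (lmul (a * x)) C) := by
      refine devle_transfer γ _ _ _ _
        (fun K => ⟨Submodule.comap (lmul (a * x)) K.1 ⊓ C,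
          le_inf (le_trans inf_le_left (Submodule.comap_mono K.2.1)) inf_le_right,
          inf_le_right⟩) ?_ ?_ hdevVC
      · intro K K' h
        exact inf_le_inf_right _ (Submodule.comap_mono h)
      · intro K K' h
        rcases lt_iff_le_not_ge.1 h with ⟨hle, hnle⟩
        refine Subtype.mk_lt_mk.2 (lt_iff_le_not_ge.2
          ⟨inf_le_inf_right _ (Submodule.comap_mono hle), fun hcon2 => ?_⟩)
        obtain ⟨k', hk'K', hk'K⟩ := SetLike.not_le_iff_exists.1 (show ¬ K'.1 ≤ K.1 from hnle)
        have hk'C' : k' ∈ b ⊔ Submodule.map (lmul (a * x)) C := K'.2.2 hk'K'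
        rw [Submodule.mem_sup] at hk'C'
        obtain ⟨ξ, hξ, w, hw, hsum⟩ := hk'C'
        obtain ⟨m, hmC, rfl⟩ := hw
        have hmeq : (a * x) * m = k' - ξ := eq_sub_of_add_eq' hsum
        have hmK' : m ∈ Submodule.comap (lmul (a * x)) K'.1 ⊓ C := by
          refine ⟨show (a * x) * m ∈ K'.1 from ?_, hmC⟩
          rw [hmeq]
          exact K'.1.sub_mem hk'K' (K'.2.1 hξ)
        have hmK : m ∉ Submodule.comap (lmul (a * x)) K.1 ⊓ C := by
          rintro ⟨h1, -⟩
          apply hk'K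
          have : k' = ξ + (a * x) * m := hsum.symm
          rw [this]
          exact K.1.add_mem (K.2.1 hξ) h1
        exact hmK (hcon2 hmK')
    exact hmin γ hγβ ⟨_, le_sup_left, hC'b,
      le_trans hC'C (le_trans hCC₀ hC₀X), hdevC'⟩
  refine ⟨a * x, (le_trans hCC₀ hC₀X) huC, hub, fun r hr => hV ⟨hr.1, hrange hr.2⟩⟩

/-- `Good t u`: the first `t` values of `u` form a triangular system of elements of `Q`
with trivial kernels, as in Goldie's theorem. -/
def Good (b Q : Submodule Aᵐᵒᵖ A) (t : ℕ) (u : ℕ → A) : Prop :=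
  (∀ i, i < t → u i ∈ Q ∧ u i ∉ b ∧
    Submodule.comap (lmul (u i)) b ⊓ (b ⊔ LinearMap.range (lmul (u i))) ≤ b) ∧
  (∀ i j, i < j → j < t → u i * u j ∈ b)

lemma good_congr {t : ℕ} {u u' : ℕ → A} (h : ∀ i, i < t → u i = u' i)
    (hg : Good b Q t u) : Good b Q t u' := by
  constructor
  · intro i hi
    rw [← h i hi]
    exact hg.1 i hi
  · intro i j hij hj
    rw [← h i (hij.trans hj), ← h j hj]
    exact hg.2 i j hij hj

lemma sumlem (hb : IsPrime2 b) {t : ℕ} {u : ℕ → A} (hg : Good b Q t u) :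
    ∀ (F : Finset ℕ), (∀ i ∈ F, i < t) →
    ∀ (s : ℕ → A), (∑ i ∈ F, u i * s i) ∈ b → ∀ i ∈ F, u i * s i ∈ b := by
  classical
  intro F
  induction F using Finset.strongInduction with
  | _ F IH =>
    intro hFt s hsum i hi
    have hne : F.Nonempty := ⟨i, hi⟩
    set i₀ := F.min' hne with hi₀
    have hi₀F : i₀ ∈ F := F.min'_mem hne
    have herase : ∀ j ∈ F.erase i₀, u j * s j ∈ Submodule.comap (lmul (u i₀)) b := by
      intro j hj
      have hjF := Finset.mem_of_mem_erase hj
      have hlt : i₀ < j := lt_of_le_of_ne (F.min'_le j hjF) (Ne.symm (Finset.ne_of_mem_erase hj))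
      show u i₀ * (u j * s j) ∈ b
      rw [← mul_assoc]
      exact smul_op_mem b (hg.2 i₀ j hlt (hFt j hjF)) (s j)
    have hsumerase : (∑ j ∈ F.erase i₀, u j * s j) ∈ Submodule.comap (lmul (u i₀)) b :=
      Submodule.sum_mem _ herase
    have hi₀b : u i₀ * s i₀ ∈ b := by
      have h1 : u i₀ * s i₀ + ∑ j ∈ F.erase i₀, u j * s j = ∑ j ∈ F, u j * s j :=
        Finset.add_sum_erase F (fun j => u j * s j) hi₀F
      have h2 : u i₀ * s i₀ ∈ Submodule.comap (lmul (u i₀)) b := by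
        have hFb : (∑ j ∈ F, u j * s j) ∈ Submodule.comap (lmul (u i₀)) b :=
          Submodule.mem_comap.2 (left_mul_mem hb hsum (u i₀))
        have := (Submodule.comap (lmul (u i₀)) b).sub_mem hFb hsumerase
        rw [← h1] at this
        simpa using this
      have h3 : u i₀ * s i₀ ∈ b ⊔ LinearMap.range (lmul (u i₀)) :=
        Submodule.mem_sup_right ⟨s i₀, rfl⟩
      exact (hg.1 i₀ (hFt i₀ hi₀F)).2.2 ⟨h2, h3⟩
    rcases eq_or_ne i i₀ with rfl | hne'
    · exact hi₀b
    · have hrest : (∑ j ∈ F.erase i₀, u j * s j) ∈ b := by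
        have h1 : u i₀ * s i₀ + ∑ j ∈ F.erase i₀, u j * s j = ∑ j ∈ F, u j * s j :=
          Finset.add_sum_erase F (fun j => u j * s j) hi₀F
        have := b.sub_mem hsum hi₀b
        rw [← h1] at this
        simpa using this
      exact IH (F.erase i₀) (Finset.erase_ssubset hi₀F)
        (fun j hj => hFt j (Finset.mem_of_mem_erase hj)) s hrest i
        (Finset.mem_erase.2 ⟨hne', hi⟩)

lemma exists_reg (hb : IsPrime2 b) (hQ : IsTwoSidedR Q) (hbQ : b < Q)
    {α : Ordinal.{0}} (hdev : DevLEInt α b ⊤) :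
    ∃ c, c ∈ Q ∧ ∀ r : A, c * r ∈ b → r ∈ b := by
  classical
  have key : ∃ t u, Good b Q t u ∧ (∀ r : A, (∀ i, i < t → u i * r ∈ b) → r ∈ b) := by
    by_contra hcon
    push_neg at hcon
    -- extension step
    have hstep : ∀ (t : ℕ) (u : ℕ → A), Good b Q t u →
        ∃ a, (a ∈ Q ∧ a ∉ b ∧
          Submodule.comap (lmul a) b ⊓ (b ⊔ LinearMap.range (lmul a)) ≤ b) ∧
          ∀ i, i < t → u i * a ∈ b := by
      intro t u hu
      obtain ⟨r, hr1, hr2⟩ := hcon t u hu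
      set Z : Submodule Aᵐᵒᵖ A := ⨅ (i : Fin t), Submodule.comap (lmul (u i.1)) b with hZ
      have hrZ : r ∈ Z := Submodule.mem_iInf _ |>.2 (fun i => hr1 i.1 i.2)
      have hZb : ¬ Z ≤ b := fun hle => hr2 (hle hrZ)
      obtain ⟨v, hvZ, hvQ, hvb⟩ := ess_meet hb hQ hbQ Z hZb
      have hbZ : b ≤ Z := le_iInf (fun i => fun r' hr' => left_mul_mem hb hr' (u i.1))
      have hbZQ : b ≤ Z ⊓ Q := le_inf hbZ hbQ.le
      have hZQb : ¬ Z ⊓ Q ≤ b := fun hle => hvb (hle ⟨hvZ, hvQ⟩)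
      obtain ⟨a, haZQ, hab, haker⟩ := exists_goodu hb hdev (Z ⊓ Q) hbZQ hZQb
      refine ⟨a, ⟨haZQ.2, hab, haker⟩, fun i hi => ?_⟩
      exact (Submodule.mem_iInf _).1 haZQ.1 ⟨i, hi⟩
    -- iterate
    have hstep2 : ∀ (t : ℕ) (p : {u : ℕ → A // Good b Q t u}),
        Good b Q (t+1) (Function.update p.1 t (Classical.choose (hstep t p.1 p.2))) := by
      intro t p
      obtain ⟨⟨haQ, hab, haker⟩, htri⟩ := Classical.choose_spec (hstep t p.1 p.2)
      constructor
      · intro i hi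
        rcases Nat.lt_succ_iff_lt_or_eq.1 hi with hlt | rfl
        · rw [Function.update_of_ne (Nat.ne_of_lt hlt)]
          exact p.2.1 i hlt
        · rw [Function.update_self]
          exact ⟨haQ, hab, haker⟩
      · intro i j hij hj
        have hit : i < t := lt_of_lt_of_le hij (Nat.lt_succ_iff.1 hj)
        rw [Function.update_of_ne (Nat.ne_of_lt hit)]
        rcases Nat.lt_succ_iff_lt_or_eq.1 hj with hlt | rfl
        · rw [Function.update_of_ne (Nat.ne_of_lt hlt)]
          exact p.2.2 i j hij hlt
        · rw [Function.update_self]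
          exact htri i hit
    set seq : (t : ℕ) → {u : ℕ → A // Good b Q t u} := fun t => Nat.rec
      ⟨fun _ => 0, ⟨fun i hi => absurd hi (Nat.not_lt_zero i),
        fun i j _ hj => absurd hj (Nat.not_lt_zero j)⟩⟩
      (fun t p => ⟨Function.update p.1 t (Classical.choose (hstep t p.1 p.2)), hstep2 t p⟩) t
      with hseq
    have hseqsucc : ∀ t, (seq (t+1)).1 =
        Function.update (seq t).1 t (Classical.choose (hstep t (seq t).1 (seq t).2)) := by
      intro t; rw [hseq]
    set U : ℕ → A := fun i => (seq (i+1)).1 i with hU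
    have hagree : ∀ t i, i < t → (seq t).1 i = U i := by
      intro t
      induction t with
      | zero => intro i hi; exact absurd hi (Nat.not_lt_zero i)
      | succ t IH =>
        intro i hi
        rcases Nat.lt_succ_iff_lt_or_eq.1 hi with hlt | rfl
        · rw [hseqsucc t, Function.update_of_ne (Nat.ne_of_lt hlt)]
          exact IH i hlt
        · rfl
    have hGoodU : ∀ t, Good b Q t U := fun t => good_congr (hagree t) (seq t).2
    -- independent family, contradiction with fu
    have hfu := fu α b ⊤ (fun i => b ⊔ LinearMap.range (lmul (U i))) ?_ (fun n => le_top) ?_ hdev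
    · exact hfu
    · intro n
      refine SetLike.lt_iff_le_and_exists.2 ⟨le_sup_left, U n, ?_, ((hGoodU (n+1)).1 n (Nat.lt_succ_self n)).2.1⟩
      exact Submodule.mem_sup_right ⟨1, mul_one (U n)⟩
    · intro F y hy hsum i hi
      have hdec : ∀ j, ∃ p : A × A, j ∈ F → p.1 ∈ b ∧ y j = p.1 + U j * p.2 := by
        intro j
        by_cases hj : j ∈ F
        · have := hy j hj
          rw [Submodule.mem_sup] at this
          obtain ⟨ξ, hξ, w, ⟨sw, rfl⟩, hws⟩ := this
          exact ⟨(ξ, sw), fun _ => ⟨hξ, hws.symm⟩⟩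
        · exact ⟨(0, 0), fun h => absurd h hj⟩
      choose pdec hpdec using hdec
      have hysplit : ∑ j ∈ F, y j = (∑ j ∈ F, (pdec j).1) + ∑ j ∈ F, U j * (pdec j).2 := by
        rw [← Finset.sum_add_distrib]
        exact Finset.sum_congr rfl (fun j hj => (hpdec j hj).2)
      have hs2 : (∑ j ∈ F, U j * (pdec j).2) ∈ b := by
        have h1 : (∑ j ∈ F, (pdec j).1) ∈ b := Submodule.sum_mem _ (fun j hj => (hpdec j hj).1)
        have := b.sub_mem hsum h1
        rw [hysplit] at this
        simpa using this
      have hFt : ∀ j ∈ F, j < F.sup id + 1 :=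
        fun j hj => Nat.lt_succ_of_le (Finset.le_sup (f := id) hj)
      have := sumlem hb (hGoodU (F.sup id + 1)) F hFt (fun j => (pdec j).2) hs2 i hi
      rw [(hpdec i hi).2]
      exact b.add_mem (hpdec i hi).1 this
  obtain ⟨t, u, hGood, hreg⟩ := key
  refine ⟨∑ i ∈ Finset.range t, u i, Submodule.sum_mem _
    (fun i hi => (hGood.1 i (Finset.mem_range.1 hi)).1), fun r hr => ?_⟩
  have hsum : (∑ i ∈ Finset.range t, u i * r) ∈ b := by
    rw [← Finset.sum_mul]
    exact hr
  exact hreg r (fun i hi => sumlem hb hGood (Finset.range t)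
    (fun j hj => Finset.mem_range.1 hj) (fun _ => r) hsum i (Finset.mem_range.2 hi))

theorem main_ind : ∀ (α : Ordinal.{0}) (P : ℕ → Submodule Aᵐᵒᵖ A),
    (∀ n, IsPrime2 (P n)) → (∀ n, P n < P (n + 1)) → DevLEInt α (P 0) ⊤ → False := by
  intro α
  induction α using Ordinal.induction with
  | h α IH =>
  intro P hprime hlt hdev
  obtain ⟨c, hcQ, hcreg⟩ := exists_reg (hprime 0) (hprime 1).1 (hlt 0) hdev
  have hregpow : ∀ n r, c ^ n * r ∈ P 0 → r ∈ P 0 := by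
    intro n
    induction n with
    | zero => intro r h; simpa using h
    | succ n IHn =>
      intro r h
      have h' : c ^ n * (c * r) ∈ P 0 := by
        rw [← mul_assoc, ← pow_succ]
        exact h
      exact hcreg r (IHn (c * r) h')
  have hQtop : P 1 ≠ ⊤ := (hprime 1).2.1
  have hPle : P 0 ≤ P 1 := (hlt 0).le
  set F : ℕ → Submodule Aᵐᵒᵖ A := fun n => P 0 ⊔ LinearMap.range (lmul (c ^ n)) with hF
  have hFdesc_le : ∀ n, F (n + 1) ≤ F n := by
    intro n
    simp only [hF]
    refine sup_le le_sup_left ?_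
    rintro _ ⟨s, rfl⟩
    refine Submodule.mem_sup_right ⟨c * s, ?_⟩
    show c ^ n * (c * s) = lmul (c ^ (n+1)) s
    rw [← mul_assoc, ← pow_succ]
    rfl
  have hstrict : ∀ n, F (n + 1) < F n := by
    intro n
    refine SetLike.lt_iff_le_and_exists.2 ⟨hFdesc_le n, c ^ n,
      Submodule.mem_sup_right ⟨1, mul_one _⟩, ?_⟩
    intro hmem
    rw [hF, Submodule.mem_sup] at hmem
    obtain ⟨ξ, hξ, w, ⟨s, rfl⟩, hsum⟩ := hmem
    have hξeq : ξ = c ^ n - c ^ (n + 1) * s := eq_sub_of_add_eq hsum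
    have h1 : c ^ n * (1 - c * s) ∈ P 0 := by
      have : c ^ n * (1 - c * s) = c ^ n - c ^ (n + 1) * s := by
        rw [mul_sub, mul_one, ← mul_assoc, ← pow_succ]
      rw [this, ← hξeq]
      exact hξ
    have h2 : (1 : A) - c * s ∈ P 0 := hregpow n _ h1
    apply hQtop
    have h1Q : (1 : A) ∈ P 1 := by
      have he : (1 : A) = (1 - c * s) + c * s := by abel
      rw [he]
      exact (P 1).add_mem (hPle h2) (smul_op_mem _ hcQ s)
    rw [eq_top_iff]
    intro y _
    simpa using smul_op_mem (P 1) h1Q y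
  obtain ⟨N, hN⟩ := devleInt_chain hdev F (fun n => ⟨le_sup_left, le_top⟩) hstrict
  obtain ⟨β, hβ, hint⟩ := hN N le_rfl
  have hdevQ : DevLEInt β (P 1) ⊤ := by
    have hlow : ∀ y : {x : Submodule Aᵐᵒᵖ A // P 1 ≤ x ∧ x ≤ ⊤},
        F (N + 1) ≤ P 0 ⊔ Submodule.map (lmul (c ^ N)) y.1 := by
      intro y
      simp only [hF]
      refine sup_le le_sup_left ?_
      rintro _ ⟨s, rfl⟩
      refine Submodule.mem_sup_right ⟨c * s, smul_op_mem _ (y.2.1 hcQ) s, ?_⟩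
      show c ^ N * (c * s) = lmul (c ^ (N + 1)) s
      rw [← mul_assoc, ← pow_succ]
      rfl
    have hup : ∀ y : {x : Submodule Aᵐᵒᵖ A // P 1 ≤ x ∧ x ≤ ⊤},
        P 0 ⊔ Submodule.map (lmul (c ^ N)) y.1 ≤ F N := by
      intro y
      simp only [hF]
      refine sup_le le_sup_left ?_
      rintro _ ⟨m, hm, rfl⟩
      exact Submodule.mem_sup_right ⟨m, rfl⟩
    have hrefl : ∀ (x y : {x : Submodule Aᵐᵒᵖ A // P 1 ≤ x ∧ x ≤ ⊤}),
        P 0 ⊔ Submodule.map (lmul (c ^ N)) y.1 ≤ P 0 ⊔ Submodule.map (lmul (c ^ N)) x.1 →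
        y.1 ≤ x.1 := by
      intro x y hcon k' hk'
      have hmem : c ^ N * k' ∈ P 0 ⊔ Submodule.map (lmul (c ^ N)) x.1 :=
        hcon (Submodule.mem_sup_right ⟨k', hk', rfl⟩)
      rw [Submodule.mem_sup] at hmem
      obtain ⟨ξ, hξ, w, ⟨m, hm, rfl⟩, hsum⟩ := hmem
      have hmeq : c ^ N * (k' - m) ∈ P 0 := by
        have he : c ^ N * (k' - m) = ξ := by
          rw [mul_sub]
          have h2 : (lmul (c ^ N)) m = c ^ N * m := rfl
          rw [eq_sub_of_add_eq hsum, h2]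
        rw [he]
        exact hξ
      have hk'm : k' - m ∈ P 0 := hregpow N _ hmeq
      have he2 : k' = (k' - m) + m := by abel
      rw [he2]
      exact x.1.add_mem (x.2.1 (hPle hk'm)) hm
    refine devle_transfer β _ _ _ _
      (fun y => ⟨P 0 ⊔ Submodule.map (lmul (c ^ N)) y.1, hlow y, hup y⟩) ?_ ?_ hint
    · intro x y h
      exact show P 0 ⊔ _ ≤ P 0 ⊔ _ from sup_le_sup_left (Submodule.map_mono h) _
    · intro x y h
      rcases lt_iff_le_not_ge.1 h with ⟨hle, hnle⟩
      exact Subtype.mk_lt_mk.2 (lt_iff_le_not_ge.2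
        ⟨sup_le_sup_left (Submodule.map_mono hle) _, fun hcon => hnle (hrefl x y hcon)⟩)
  exact IH β hβ (fun k => P (k + 1)) (fun k => hprime (k + 1)) (fun k => hlt (k + 1)) hdevQ

end Ring

theorem stmt17 (A : Type) [Ring A] (h : HasKdimO (Submodule Aᵐᵒᵖ A)) :
    ∀ f : ℕ → Submodule Aᵐᵒᵖ A, (∀ n, IsPrime2 (f n)) → Monotone f →
      ∃ N : ℕ, ∀ n : ℕ, N ≤ n → f n = f N := by
  intro f hprime hmono
  by_contra hcon
  push_neg at hcon
  have hstep : ∀ N : ℕ, ∃ n, N ≤ n ∧ f N < f n := by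
    intro N
    obtain ⟨n, hn, hne⟩ := hcon N
    exact ⟨n, hn, lt_of_le_of_ne (hmono hn) (Ne.symm hne)⟩
  classical
  set idx : ℕ → ℕ := fun k => Nat.rec 0 (fun _ m => Classical.choose (hstep m)) k with hidx
  have hP : ∀ k, f (idx k) < f (idx (k + 1)) := by
    intro k
    have he : idx (k + 1) = Classical.choose (hstep (idx k)) := rfl
    rw [he]
    exact (Classical.choose_spec (hstep (idx k))).2
  obtain ⟨α, hα⟩ := h
  exact main_ind α (fun k => f (idx k)) (fun k => hprime _) hP (devleInt_of_global hα _ _)
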